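/- Let ξ ∈ ℂ with −π/h < Re ξ ≤ π/h, Im ξ ≤ 0, ξ ≠ 0, and let ω ∈ ℝ with ω ≠ 0 be such that the mode u_j(t) = e^{−iωt} e^{iξhj} satisfies the semi-discrete wave equation d²u_j/dt²(t) = (L_p u(t))_j for all t ∈ ℝ and j ∈ ℤ (equivalently, (L_p w)_j = −ω² w_j for w_j = e^{iξhj}). Assume 2 + i(σ_m/ω)(1 − e^{iξh}) ≠ 0 for all m ≥ 0. Define U_{j,k}(t) = e^{−iωt} W_{j,k}, where W_{j,k} = (Π_{m=0}^{k−1} ρ(σ_m, ξ, ω)) e^{i(j+k)ξh} for k ≥ 0 and W_{j,k} = e^{i(j+k)ξh} for k < 0. Then: (i) for every t, the function (j,k) ↦ U_{j,k}(t) is discrete holomorphic with respect to Z; (ii) U_{j,0}(t) = u_j(t) for all j and t; (iii) d²U_{j,k}/dt²(t) = (L_p U_{·,k}(t))_j for all j, k, t; and (iv) the restriction to the stretching path satisfies U_{0,j}(t) = A(j) u_j(t) for all j ∈ ℤ and t ∈ ℝ, where A(j) = 1 for j ≤ 0 and A(j) = Π_{l=0}^{j−1} ρ(σ_l, ξ,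 ω) for j > 0. -/

import Mathlib

/-- The discrete complex stretching grid
`Z_{j,k} = (j+k)h + i(h/ω) Σ_{ℓ=0}^{k-1} σ_ℓ` (the sum being 0 for `k ≤ 0`). -/
noncomputable def Zmap (h ω : ℝ) (σ : ℤ → ℝ) (j k : ℤ) : ℂ :=
  ((j + k : ℤ) : ℂ) * (h : ℂ) +
    Complex.I * ((h : ℂ) / (ω : ℂ)) * ∑ l ∈ Finset.range k.toNat, ((σ l : ℝ) : ℂ)

/-- Discrete holomorphicity with respect to the grid `Zmap h ω σ`: the discrete
Cauchy–Riemann equations hold on every face. -/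
def DiscreteHolo (h ω : ℝ) (σ : ℤ → ℝ) (F : ℤ → ℤ → ℂ) : Prop :=
  ∀ j k : ℤ,
    (F (j + 1) (k + 1) - F j k) * (Zmap h ω σ j (k + 1) - Zmap h ω σ (j + 1) k) =
    (F j (k + 1) - F (j + 1) k) * (Zmap h ω σ (j + 1) (k + 1) - Zmap h ω σ j k)

/-- The attenuation factor
`ρ(σ, ξ, ω) = (2 + i(σ/ω)(1 − e^{−iξh})) / (2 + i(σ/ω)(1 − e^{iξh}))`. -/
noncomputable def rho (σ : ℝ) (ξ : ℂ) (ω h : ℝ) : ℂ :=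
  (2 + Complex.I * ((σ : ℂ) / (ω : ℂ)) * (1 - Complex.exp (-(Complex.I * ξ * (h : ℂ))))) /
  (2 + Complex.I * ((σ : ℂ) / (ω : ℂ)) * (1 - Complex.exp (Complex.I * ξ * (h : ℂ))))

/-- The discrete-holomorphic extension `W` of the mode `w_j = e^{i j ξ h}`:
`W_{j,k} = (Π_{m=0}^{k−1} ρ(σ_m, ξ, ω)) e^{i(j+k)ξh}` for `k ≥ 0`, and
`W_{j,k} = e^{i(j+k)ξh}` for `k < 0`. -/
noncomputable def Wext (h ω : ℝ) (σ : ℤ → ℝ) (ξ : ℂ) (j k : ℤ) : ℂ :=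
  if 0 ≤ k then
    (∏ m ∈ Finset.range k.toNat, rho (σ m) ξ ω h) *
      Complex.exp (Complex.I * ((j + k : ℤ) : ℂ) * ξ * (h : ℂ))
  else
    Complex.exp (Complex.I * ((j + k : ℤ) : ℂ) * ξ * (h : ℂ))

/-- The amplitude factor `A(j)`: `1` for `j ≤ 0` and `Π_{l=0}^{j−1} ρ(σ_l, ξ, ω)` for `j > 0`. -/
noncomputable def Afac (h ω : ℝ) (σ : ℤ → ℝ) (ξ : ℂ) (j : ℤ) : ℂ :=
  if j ≤ 0 then 1 else ∏ l ∈ Finset.range j.toNat, rho (σ l) ξ ω h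

/-- The time-dependent extension `U_{j,k}(t) = e^{−iωt} W_{j,k}`. -/
noncomputable def Uext (h ω : ℝ) (σ : ℤ → ℝ) (ξ : ℂ) (j k : ℤ) (t : ℝ) : ℂ :=
  Complex.exp (-(Complex.I * (ω : ℂ) * (t : ℂ))) * Wext h ω σ ξ j k

/-- the right-traveling mode `u_j(t) = e^{−iωt} e^{iξhj}` solving the
semi-discrete wave equation extends to the discrete holomorphic function
`U_{j,k}(t) = e^{−iωt} W_{j,k}`, whose columns solve the semi-discrete wave equation
and whose restriction to the stretching path is `U_{0,j}(t) = A(j) u_j(t)`. -/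
theorem stmt10 (p : ℕ) (hp : 1 ≤ p) (h : ℝ) (hh : 0 < h)
    (a : ℤ → ℝ) (hsym : ∀ r : ℤ, a (-r) = a r)
    (ω : ℝ) (hω : ω ≠ 0)
    (σ : ℤ → ℝ) (hσ : ∀ j : ℤ, 0 ≤ σ j) (hσneg : ∀ j : ℤ, j < 0 → σ j = 0)
    (ξ : ℂ) (hξ1 : -(Real.pi / h) < ξ.re) (hξ2 : ξ.re ≤ Real.pi / h)
    (hξ3 : ξ.im ≤ 0) (hξ4 : ξ ≠ 0)
    (hmode : ∀ j : ℤ, (∑ r ∈ Finset.Icc (-(p : ℤ)) (p : ℤ),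
        (a r : ℂ) * Complex.exp (Complex.I * ((j + r : ℤ) : ℂ) * ξ * (h : ℂ))) =
        -((ω : ℂ)) ^ 2 * Complex.exp (Complex.I * (j : ℂ) * ξ * (h : ℂ)))
    (hden : ∀ m : ℤ, 0 ≤ m →
        2 + Complex.I * ((σ m : ℂ) / (ω : ℂ)) * (1 - Complex.exp (Complex.I * ξ * (h : ℂ))) ≠ 0) :
    (∀ t : ℝ, DiscreteHolo h ω σ (fun j k => Uext h ω σ ξ j k t)) ∧
    (∀ j : ℤ, ∀ t : ℝ, Uext h ω σ ξ j 0 t =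
        Complex.exp (-(Complex.I * (ω : ℂ) * (t : ℂ))) *
          Complex.exp (Complex.I * (j : ℂ) * ξ * (h : ℂ))) ∧
    (∀ j k : ℤ, ∀ t : ℝ, deriv (deriv (fun s : ℝ => Uext h ω σ ξ j k s)) t =
        ∑ r ∈ Finset.Icc (-(p : ℤ)) (p : ℤ), (a r : ℂ) * Uext h ω σ ξ (j + r) k t) ∧
    (∀ j : ℤ, ∀ t : ℝ, Uext h ω σ ξ 0 j t =
        Afac h ω σ ξ j *
          (Complex.exp (-(Complex.I * (ω : ℂ) * (t : ℂ))) *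
            Complex.exp (Complex.I * (j : ℂ) * ξ * (h : ℂ)))) := by
  have hωC : (ω : ℂ) ≠ 0 := Complex.ofReal_ne_zero.mpr hω
  set E : ℂ := Complex.exp (Complex.I * ξ * (h : ℂ)) with hE
  have hEne : E ≠ 0 := Complex.exp_ne_zero _
  have hFE : Complex.exp (-(Complex.I * ξ * (h : ℂ))) = E⁻¹ := by
    rw [Complex.exp_neg]
  have hGsucc : ∀ n : ℤ, Complex.exp (Complex.I * ((n + 1 : ℤ) : ℂ) * ξ * (h : ℂ))
      = Complex.exp (Complex.I * ((n : ℤ) : ℂ) * ξ * (h : ℂ)) * E := by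
    intro n
    rw [hE, ← Complex.exp_add]
    congr 1
    push_cast
    ring
  have hW : ∀ j k : ℤ, Wext h ω σ ξ j k =
      (∏ m ∈ Finset.range k.toNat, rho (σ m) ξ ω h) *
        Complex.exp (Complex.I * ((j + k : ℤ) : ℂ) * ξ * (h : ℂ)) := by
    intro j k
    unfold Wext
    split
    · rfl
    · rename_i hk
      rw [Int.toNat_of_nonpos (by omega), Finset.range_zero, Finset.prod_empty, one_mul]
  have hZ1 : ∀ j k : ℤ, Zmap h ω σ j (k + 1) - Zmap h ω σ (j + 1) k =
      Complex.I * ((h : ℂ) / (ω : ℂ)) * ((σ k : ℝ) : ℂ) := by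
    intro j k
    unfold Zmap
    rcases le_or_gt 0 k with hk | hk
    · rw [show (k + 1).toNat = k.toNat + 1 by omega, Finset.sum_range_succ,
        Int.toNat_of_nonneg hk]
      push_cast
      ring
    · rw [show (k + 1).toNat = 0 by omega, show k.toNat = 0 by omega, hσneg k hk]
      push_cast
      ring
  have hZ2 : ∀ j k : ℤ, Zmap h ω σ (j + 1) (k + 1) - Zmap h ω σ j k =
      2 * (h : ℂ) + Complex.I * ((h : ℂ) / (ω : ℂ)) * ((σ k : ℝ) : ℂ) := by
    intro j k
    unfold Zmap
    rcases le_or_gt 0 k with hk | hk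
    · rw [show (k + 1).toNat = k.toNat + 1 by omega, Finset.sum_range_succ,
        Int.toNat_of_nonneg hk]
      push_cast
      ring
    · rw [show (k + 1).toNat = 0 by omega, show k.toNat = 0 by omega, hσneg k hk]
      push_cast
      ring
  have hWCR : ∀ j k : ℤ,
      (Wext h ω σ ξ (j + 1) (k + 1) - Wext h ω σ ξ j k) *
        (Zmap h ω σ j (k + 1) - Zmap h ω σ (j + 1) k) =
      (Wext h ω σ ξ j (k + 1) - Wext h ω σ ξ (j + 1) k) *
        (Zmap h ω σ (j + 1) (k + 1) - Zmap h ω σ j k) := by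
    intro j k
    rw [hZ1, hZ2, hW, hW, hW, hW]
    rcases lt_or_ge k 0 with hk | hk
    · rw [show (k + 1).toNat = 0 by omega, show k.toNat = 0 by omega, hσneg k hk,
        show (j + (k + 1) : ℤ) = (j + 1) + k by ring]
      push_cast
      ring
    · rw [show (k + 1).toNat = k.toNat + 1 by omega, Finset.prod_range_succ,
        Int.toNat_of_nonneg hk]
      set P : ℂ := ∏ m ∈ Finset.range k.toNat, rho (σ m) ξ ω h with hPdef
      set G : ℂ := Complex.exp (Complex.I * ((j + k : ℤ) : ℂ) * ξ * (h : ℂ)) with hGdef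
      have e1 : Complex.exp (Complex.I * ((j + 1 + (k + 1) : ℤ) : ℂ) * ξ * (h : ℂ))
          = G * E * E := by
        rw [show (j + 1 + (k + 1) : ℤ) = ((j + k) + 1) + 1 by ring, hGsucc, hGsucc]
      have e2 : Complex.exp (Complex.I * ((j + (k + 1) : ℤ) : ℂ) * ξ * (h : ℂ)) = G * E := by
        rw [show (j + (k + 1) : ℤ) = (j + k) + 1 by ring, hGsucc]
      have e3 : Complex.exp (Complex.I * ((j + 1 + k : ℤ) : ℂ) * ξ * (h : ℂ)) = G * E := by
        rw [show (j + 1 + k : ℤ) = (j + k) + 1 by ring, hGsucc]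
      rw [e1, e2, e3]
      have hd := hden k hk
      have hrho : rho (σ k) ξ ω h *
          (2 + Complex.I * (((σ k : ℝ) : ℂ) / (ω : ℂ)) * (1 - E)) =
          2 + Complex.I * (((σ k : ℝ) : ℂ) / (ω : ℂ)) * (1 - E⁻¹) := by
        rw [rho, hFE, ← hE, div_mul_cancel₀ _ hd]
      have hEE : E * E⁻¹ = 1 := mul_inv_cancel₀ hEne
      refine mul_right_cancel₀ hd ?_
      linear_combination
        (P * G * (Complex.I * ((h : ℂ) / (ω : ℂ)) * ((σ k : ℝ) : ℂ) * E ^ 2 -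
          E * (2 * (h : ℂ) + Complex.I * ((h : ℂ) / (ω : ℂ)) * ((σ k : ℝ) : ℂ)))) * hrho +
        (P * G * (h : ℂ) * (Complex.I * ((σ k : ℝ) : ℂ) / (ω : ℂ)) *
          (2 + Complex.I * ((σ k : ℝ) : ℂ) / (ω : ℂ) -
            Complex.I * ((σ k : ℝ) : ℂ) / (ω : ℂ) * E)) * hEE
  have key : ∀ (W : ℂ) (t : ℝ),
      HasDerivAt (fun s : ℝ => Complex.exp (-(Complex.I * (ω : ℂ) * (s : ℂ))) * W)
        (-(Complex.I * (ω : ℂ)) * (Complex.exp (-(Complex.I * (ω : ℂ) * (t : ℂ))) * W)) t := by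
    intro W t
    have h1 : HasDerivAt (fun s : ℝ => -(Complex.I * (ω : ℂ) * (s : ℂ)))
        (-(Complex.I * (ω : ℂ))) t := by
      simpa [Pi.neg_def] using ((Complex.ofRealCLM.hasDerivAt (x := t)).const_mul
        (Complex.I * (ω : ℂ))).neg
    have h2 := (h1.cexp).mul_const W
    exact h2.congr_deriv (by ring)
  have dU : ∀ j k : ℤ, deriv (fun s : ℝ => Uext h ω σ ξ j k s) =
      fun s : ℝ => Complex.exp (-(Complex.I * (ω : ℂ) * (s : ℂ))) *
        (-(Complex.I * (ω : ℂ)) * Wext h ω σ ξ j k) := by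
    intro j k
    funext s
    have := (key (Wext h ω σ ξ j k) s).deriv
    simp only [Uext]
    rw [this]
    ring
  refine ⟨?_, ?_, ?_, ?_⟩
  · intro t j k
    simp only [Uext, ← mul_sub]
    rw [mul_assoc, hWCR j k]
    ring
  · intro j t
    simp only [Uext, hW]
    rw [show ((j + 0 : ℤ) : ℂ) = (j : ℂ) by push_cast; ring]
    simp
  · intro j k t
    rw [dU j k]
    have := (key (-(Complex.I * (ω : ℂ)) * Wext h ω σ ξ j k) t).deriv
    rw [this]
    have hsum : ∑ r ∈ Finset.Icc (-(p : ℤ)) (p : ℤ), (a r : ℂ) * Uext h ω σ ξ (j + r) k t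
        = Complex.exp (-(Complex.I * (ω : ℂ) * (t : ℂ))) *
          ((∏ m ∈ Finset.range k.toNat, rho (σ m) ξ ω h) *
            (∑ r ∈ Finset.Icc (-(p : ℤ)) (p : ℤ), (a r : ℂ) *
              Complex.exp (Complex.I * ((j + k + r : ℤ) : ℂ) * ξ * (h : ℂ)))) := by
      rw [Finset.mul_sum, Finset.mul_sum]
      apply Finset.sum_congr rfl
      intro r _
      simp only [Uext, hW]
      rw [show (j + r + k : ℤ) = j + k + r by ring]
      ring
    rw [hsum, hmode (j + k), hW j k]
    push_cast
    ring_nf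
    rw [Complex.I_sq]
    ring
  · intro j t
    simp only [Uext, hW, Afac]
    rw [show ((0 + j : ℤ) : ℂ) = (j : ℂ) by push_cast; ring]
    split
    · rename_i hj
      rw [show j.toNat = 0 by omega]
      simp
    · ring
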